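/- Every finite group of orientation preserving homeomorphisms of the circle is cyclic. -/

import Mathlib

noncomputable section

open MeasureTheory

/-- The circle `S¹ = ℝ/ℤ`. -/
abbrev 𝕊 : Type := AddCircle (1 : ℝ)

/-- `F : ℝ → ℝ` is a lift of the circle bijection `f` witnessing that `f` is an
orientation preserving homeomorphism of the circle: `F` is a strictly increasing
homeomorphism of `ℝ` (equivalently, continuous and strictly increasing) satisfying
`F (x + 1) = F x + 1`, and projecting to `f`. -/
def IsOPLift (f : Equiv.Perm 𝕊) (F : ℝ → ℝ) : Prop :=
  Continuous F ∧ StrictMono F ∧ (∀ x : ℝ, F (x + 1) = F x + 1) ∧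
    ∀ x : ℝ, f (x : 𝕊) = (F x : 𝕊)

/-- `f` is an orientation preserving homeomorphism of the circle. -/
def IsOPHomeo (f : Equiv.Perm 𝕊) : Prop := ∃ F : ℝ → ℝ, IsOPLift f F

/-- `F` is a lift witnessing that `f` is an orientation preserving `C¹` diffeomorphism
of the circle: an orientation preserving lift which is `C¹` with nowhere vanishing
derivative. -/
def IsC1Lift (f : Equiv.Perm 𝕊) (F : ℝ → ℝ) : Prop :=
  IsOPLift f F ∧ ContDiff ℝ 1 F ∧ ∀ x : ℝ, deriv F x ≠ 0

/-- `f` is an orientation preserving `C¹` diffeomorphism of the circle, i.e. an element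
of `Diff¹₊(S¹)`. -/
def IsC1Diffeo (f : Equiv.Perm 𝕊) : Prop := ∃ F : ℝ → ℝ, IsC1Lift f F

namespace OPAux

lemma lift_one : IsOPLift 1 id :=
  ⟨continuous_id, strictMono_id, fun _ => rfl, fun _ => rfl⟩

lemma lift_mul {g h : Equiv.Perm 𝕊} {F H : ℝ → ℝ} (hF : IsOPLift g F) (hH : IsOPLift h H) :
    IsOPLift (g * h) (F ∘ H) := by
  obtain ⟨Fc, Fm, F1, Fl⟩ := hF
  obtain ⟨Hc, Hm, H1, Hl⟩ := hH
  refine ⟨Fc.comp Hc, Fm.comp Hm, fun x => by simp [Function.comp, H1, F1], fun x => ?_⟩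
  simp only [Equiv.Perm.mul_apply, Function.comp_apply, Hl, Fl]

lemma lift_pow {g : Equiv.Perm 𝕊} {F : ℝ → ℝ} (hF : IsOPLift g F) :
    ∀ k : ℕ, IsOPLift (g ^ k) (F^[k])
  | 0 => by simpa using lift_one
  | (k + 1) => by
      rw [pow_succ, Function.iterate_succ]
      exact lift_mul (lift_pow hF k) hF

lemma lift_sub_int {g : Equiv.Perm 𝕊} {F : ℝ → ℝ} (hF : IsOPLift g F) (m : ℤ) :
    IsOPLift g (fun x => F x - m) := by
  obtain ⟨Fc, Fm, F1, Fl⟩ := hF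
  refine ⟨Fc.sub continuous_const, fun a b hab => by simpa using Fm hab,
    fun x => by show F (x + 1) - (m : ℝ) = F x - m + 1; rw [F1]; ring, fun x => ?_⟩
  rw [Fl x]
  show (F x : 𝕊) = ((F x - (m : ℝ) : ℝ) : 𝕊)
  rw [QuotientAddGroup.eq_iff_sub_mem]
  refine AddSubgroup.mem_zmultiples_iff.mpr ⟨m, ?_⟩
  simp [zsmul_eq_mul]

lemma half_ne_int (mz mw : ℤ) (h : (mz : ℝ) = mw + 1/2) : False := by
  have : ((2 * (mz - mw) : ℤ) : ℝ) = 1 := by push_cast; linarith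
  have : (2 * (mz - mw) : ℤ) = 1 := by exact_mod_cast this
  omega

lemma int_valued_const {u : ℝ → ℝ} (hc : Continuous u) (hi : ∀ x, ∃ m : ℤ, u x = m)
    (x y : ℝ) : u x = u y := by
  have key : ∀ a b : ℝ, a ≤ b → u a = u b := by
    intro a b hab
    by_contra hne
    obtain ⟨ma, hma⟩ := hi a
    obtain ⟨mb, hmb⟩ := hi b
    rcases lt_or_gt_of_ne hne with hlt | hgt
    · have hmlt : ma < mb := by exact_mod_cast hma ▸ hmb ▸ hlt
      have hmem : u a + 1/2 ∈ Set.Icc (u a) (u b) := by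
        refine ⟨by linarith, ?_⟩
        rw [hma, hmb]
        have : (ma : ℝ) + 1 ≤ mb := by exact_mod_cast hmlt
        linarith
      obtain ⟨z, _, hz⟩ := intermediate_value_Icc hab hc.continuousOn hmem
      obtain ⟨mz, hmz⟩ := hi z
      rw [hmz, hma] at hz
      exact half_ne_int mz ma hz
    · have hmlt : mb < ma := by exact_mod_cast hmb ▸ hma ▸ hgt
      have hmem : u b + 1/2 ∈ Set.Icc (u b) (u a) := by
        refine ⟨by linarith, ?_⟩
        rw [hma, hmb]
        have : (mb : ℝ) + 1 ≤ ma := by exact_mod_cast hmlt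
        linarith
      obtain ⟨z, _, hz⟩ := intermediate_value_Icc' hab hc.continuousOn hmem
      obtain ⟨mz, hmz⟩ := hi z
      rw [hmz, hmb] at hz
      exact half_ne_int mz mb hz
  rcases le_total x y with h | h
  · exact key x y h
  · exact (key y x h).symm

lemma lift_unique {g : Equiv.Perm 𝕊} {F H : ℝ → ℝ} (hF : IsOPLift g F) (hH : IsOPLift g H) :
    ∃ m : ℤ, ∀ x, F x = H x + m := by
  have hi : ∀ x, ∃ m : ℤ, F x - H x = m := by
    intro x
    have : (F x : 𝕊) = (H x : 𝕊) := by rw [← hF.2.2.2 x, ← hH.2.2.2 x]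
    rw [QuotientAddGroup.eq_iff_sub_mem] at this
    obtain ⟨k, hk⟩ := AddSubgroup.mem_zmultiples_iff.mp this
    exact ⟨k, by rw [← hk]; simp⟩
  obtain ⟨m, hm⟩ := hi 0
  refine ⟨m, fun x => ?_⟩
  have := int_valued_const (hF.1.sub hH.1) (fun x => hi x) x 0
  simp only [Pi.sub_apply] at this
  linarith [this, hm]

lemma lift_of_one {F : ℝ → ℝ} (hF : IsOPLift 1 F) : ∃ m : ℤ, ∀ x, F x = x + m := by
  simpa using lift_unique hF lift_one



lemma iterate_id_of_fix {E : ℝ → ℝ} (Em : StrictMono E) {d : ℕ} (hd : 0 < d)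
    (hEd : ∀ x, E^[d] x = x) : ∀ x, E x = x := by
  intro x
  rcases lt_trichotomy (E x) x with hlt | heq | hgt
  · exfalso
    have h1 : ∀ j : ℕ, E^[j + 1] x < x := by
      intro j
      induction j with
      | zero => simpa using hlt
      | succ j ih =>
        have h2 : E^[j + 1] (E x) < E^[j + 1] x := (Em.iterate (j + 1)) hlt
        rw [← Function.iterate_succ_apply] at h2
        exact lt_trans h2 ih
    obtain ⟨j, hj⟩ : ∃ j, d = j + 1 := ⟨d - 1, by omega⟩
    have := h1 j
    rw [← hj, hEd x] at this
    exact lt_irrefl x this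
  · exact heq
  · exfalso
    have h1 : ∀ j : ℕ, x < E^[j + 1] x := by
      intro j
      induction j with
      | zero => simpa using hgt
      | succ j ih =>
        have h2 : E^[j + 1] x < E^[j + 1] (E x) := (Em.iterate (j + 1)) hgt
        rw [← Function.iterate_succ_apply] at h2
        exact lt_trans ih h2
    obtain ⟨j, hj⟩ : ∃ j, d = j + 1 := ⟨d - 1, by omega⟩
    have := h1 j
    rw [← hj, hEd x] at this
    exact lt_irrefl x this

lemma fix_eq_one {G : Subgroup (Equiv.Perm 𝕊)} [Finite G] (u : G) {E : ℝ → ℝ}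
    (hE : IsOPLift (u : Equiv.Perm 𝕊) E) {x₀ : ℝ} (hx : E x₀ = x₀) : u = 1 := by
  set d := orderOf u with hdd
  have hd : 0 < d := orderOf_pos u
  have hu : ((u : Equiv.Perm 𝕊)) ^ d = 1 := by
    have := pow_orderOf_eq_one u
    exact_mod_cast congrArg (Subtype.val) this
  have hEd : IsOPLift 1 (E^[d]) := hu ▸ lift_pow hE d
  obtain ⟨m, hm⟩ := lift_of_one hEd
  have hfix : E^[d] x₀ = x₀ := Function.iterate_fixed hx d
  have hm0 : (m : ℝ) = 0 := by have := hm x₀; rw [hfix] at this; linarith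
  have hEid : ∀ x, E^[d] x = x := by intro x; rw [hm x, hm0, add_zero]
  have hE1 : ∀ x, E x = x := iterate_id_of_fix hE.2.1 hd hEid
  have : (u : Equiv.Perm 𝕊) = 1 := by
    refine Equiv.ext fun z => ?_
    induction z using QuotientAddGroup.induction_on with
    | H x => rw [hE.2.2.2 x, hE1 x]; rfl
  exact Subtype.ext this

lemma iterate_add_one {F : ℝ → ℝ} (F1 : ∀ x, F (x + 1) = F x + 1) :
    ∀ (k : ℕ) (x : ℝ), F^[k] (x + 1) = F^[k] x + 1 := by
  intro k
  induction k with
  | zero => simp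
  | succ k ih =>
    intro x
    rw [Function.iterate_succ_apply, Function.iterate_succ_apply, F1, ih]


end OPAux

/-- Every finite group of orientation preserving homeomorphisms of the
circle is cyclic. -/
theorem finite_orientation_preserving_group_is_cyclic
    (G : Subgroup (Equiv.Perm 𝕊)) [Finite G]
    (hop : ∀ f ∈ G, IsOPHomeo f) :
    IsCyclic G := by
  classical
  rcases subsingleton_or_nontrivial G with hs | hn
  · exact isCyclic_of_subsingleton
  haveI : Fintype G := Fintype.ofFinite G
  -- choose normalized lifts
  have hlifts : ∀ u : G, ∃ F : ℝ → ℝ, IsOPLift (u : Equiv.Perm 𝕊) F ∧ 0 ≤ F 0 ∧ F 0 < 1 := by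
    intro u
    obtain ⟨F, hF⟩ := hop u u.2
    refine ⟨fun x => F x - (⌊F 0⌋ : ℝ), OPAux.lift_sub_int hF ⌊F 0⌋, ?_, ?_⟩
    · simp only [sub_nonneg]; exact Int.floor_le (F 0)
    · have := Int.lt_floor_add_one (F 0); simp only; linarith
  choose φ hφ hφ0 hφ1 using hlifts
  have hpos : ∀ u : G, u ≠ 1 → 0 < φ u 0 := by
    intro u hu
    rcases (hφ0 u).lt_or_eq with h | h
    · exact h
    · exact absurd (OPAux.fix_eq_one u (hφ u) h.symm) hu
  set S : Finset G := Finset.univ.filter (fun u : G => u ≠ 1) with hS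
  obtain ⟨v, hv⟩ := exists_ne (1 : G)
  obtain ⟨g₀, hg₀S, hg₀min⟩ := Finset.exists_min_image S (fun u => φ u 0)
    ⟨v, by simp [hS, hv]⟩
  have hg₀1 : g₀ ≠ 1 := by simpa [hS] using hg₀S
  set F₀ : ℝ → ℝ := φ g₀ with hF₀def
  have hF₀ : IsOPLift (g₀ : Equiv.Perm 𝕊) F₀ := hφ g₀
  have Fm : StrictMono F₀ := hF₀.2.1
  have ha : 0 < F₀ 0 := hpos g₀ hg₀1
  have incr : ∀ j : ℕ, F₀^[j] 0 < F₀^[j + 1] 0 := by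
    intro j
    rw [Function.iterate_succ_apply]
    exact (Fm.iterate j) ha
  have mono_seq : Monotone (fun j : ℕ => F₀^[j] 0) :=
    monotone_nat_of_le_succ fun j => (incr j).le
  -- translation part of F₀^[d]
  set d := orderOf g₀ with hdd
  have hd : 0 < d := orderOf_pos g₀
  have hg₀d : ((g₀ : Equiv.Perm 𝕊)) ^ d = 1 := by
    exact_mod_cast congrArg Subtype.val (pow_orderOf_eq_one g₀)
  obtain ⟨m₀, hm₀⟩ := OPAux.lift_of_one (hg₀d ▸ OPAux.lift_pow hF₀ d)
  have hm₀pos : (1 : ℝ) ≤ (m₀ : ℝ) := by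
    have h1 : F₀ 0 ≤ F₀^[d] 0 := by
      have := mono_seq (show 1 ≤ d from hd)
      simpa using this
    have h2 : (0 : ℝ) < m₀ := by have := hm₀ 0; rw [this] at h1; linarith
    exact_mod_cast (by exact_mod_cast h2 : (0 : ℤ) < m₀)
  have growth : ∀ t : ℕ, (t : ℝ) ≤ F₀^[d * t] 0 := by
    intro t
    induction t with
    | zero => simp
    | succ t ih =>
      have : F₀^[d * (t + 1)] 0 = F₀^[d * t] 0 + m₀ := by
        rw [show d * (t + 1) = d + d * t by ring, Function.iterate_add_apply, hm₀]
      rw [this]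
      push_cast
      linarith
  -- every element is a power of g₀
  have main : ∀ u : G, ∃ k : ℕ, u = g₀ ^ k := by
    intro u
    set b := φ u 0 with hb
    have hb0 : 0 ≤ b := hφ0 u
    have hPex : ∃ j : ℕ, b < F₀^[j] 0 := by
      refine ⟨d * (⌊b⌋₊ + 1), ?_⟩
      have h1 := growth (⌊b⌋₊ + 1)
      have h2 := Nat.lt_floor_add_one b
      push_cast at h1
      linarith
    set j₀ := Nat.find hPex with hj₀def
    have hj₀ : b < F₀^[j₀] 0 := Nat.find_spec hPex
    have hj₀0 : j₀ ≠ 0 := by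
      intro h
      rw [h] at hj₀
      simp at hj₀
      linarith
    set k := j₀ - 1 with hkdef
    have hk1 : F₀^[k] 0 ≤ b := by
      have := Nat.find_min hPex (show k < j₀ by omega)
      linarith [not_lt.mp this]
    have hk2 : b < F₀^[k + 1] 0 := by
      rw [show k + 1 = j₀ by omega]
      exact hj₀
    set h : G := (g₀ ^ k)⁻¹ * u with hhdef
    by_cases hh : h = 1
    · exact ⟨k, (inv_mul_eq_one.mp hh).symm⟩
    exfalso
    have hc : F₀ 0 ≤ φ h 0 := hg₀min h (by simp [hS, hh])
    have hc1 : φ h 0 < 1 := hφ1 h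
    have hmul : g₀ ^ k * h = u := by rw [hhdef, mul_inv_cancel_left]
    have hcoe : ((g₀ : Equiv.Perm 𝕊)) ^ k * ((h : G) : Equiv.Perm 𝕊) = (u : Equiv.Perm 𝕊) := by
      exact_mod_cast congrArg Subtype.val hmul
    have hlift : IsOPLift (u : Equiv.Perm 𝕊) (F₀^[k] ∘ φ h) :=
      hcoe ▸ OPAux.lift_mul (OPAux.lift_pow hF₀ k) (hφ h)
    obtain ⟨m, hm⟩ := OPAux.lift_unique hlift (hφ u)
    have hm0 : F₀^[k] (φ h 0) = b + m := hm 0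
    have lower : F₀^[k + 1] 0 ≤ F₀^[k] (φ h 0) := by
      rw [Function.iterate_succ_apply]
      exact (Fm.iterate k).monotone hc
    have upper : F₀^[k] (φ h 0) < F₀^[k] 0 + 1 := by
      have h1 : F₀^[k] (φ h 0) < F₀^[k] 1 := (Fm.iterate k) hc1
      have h2 : F₀^[k] (1 : ℝ) = F₀^[k] 0 + 1 := by
        have := OPAux.iterate_add_one hF₀.2.2.1 k 0
        simpa using this
      linarith
    have hmge : (1 : ℝ) ≤ (m : ℝ) := by
      have : (0 : ℝ) < m := by linarith
      exact_mod_cast (by exact_mod_cast this : (0 : ℤ) < m)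
    linarith
  refine ⟨⟨g₀, fun u => ?_⟩⟩
  obtain ⟨k, hk⟩ := main u
  exact Subgroup.mem_zpowers_iff.mpr ⟨(k : ℤ), by rw [zpow_natCast, ← hk]⟩
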